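/- Let $\alpha \in (1/2,1)$, $t > t_0 > 0$, and let $K_s(x)$ satisfy $|K_s(x)| \leq C(s^{1/(2\alpha)}+|x|)^{-(n+1)}$ for all $s > 0$. Suppose $u$ satisfies $\|u\|_{GX} = \sup_{s>0} s^{1-1/(2\alpha)} \|u(\cdot,s)\|_{L^\infty} < \infty$. Then $t^{1-1/(2\alpha)} \Big\| \int_0^{t_0} \int_{\mathbb{R}^n} K_{t+t_0-s}(x-y)\, |u(y,s)|^2 \, dy\, ds \Big\|_{L^\infty_x} \leq C_\alpha (t_0/t)^{(1-\alpha)/\alpha} \|u\|_{GX}^2 \leq C_\alpha \|u\|_{GX}^2$. -/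

import Mathlib

open MeasureTheory Real
open scoped ENNReal

/-- The `GX` norm `‖u‖_{GX} = sup_{s>0} s^{1-1/(2α)} ‖u(·,s)‖_{L^∞}`. -/
noncomputable def GXnorm (n : ℕ) (α : ℝ)
    (u : EuclideanSpace ℝ (Fin n) → ℝ → EuclideanSpace ℝ (Fin n)) : ℝ≥0∞ :=
  ⨆ (s : ℝ) (_ : 0 < s),
    ENNReal.ofReal (s ^ (1 - 1/(2*α))) *
      ⨆ x : EuclideanSpace ℝ (Fin n), (‖u x s‖₊ : ℝ≥0∞)

lemma aux_I_lt_top (n : ℕ) :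
    (∫⁻ z : EuclideanSpace ℝ (Fin n), ENNReal.ofReal ((1 + ‖z‖) ^ (-(n:ℝ) - 1))) < ⊤ := by
  have h : ((Module.finrank ℝ (EuclideanSpace ℝ (Fin n))) : ℝ) < (n:ℝ) + 1 := by
    rw [finrank_euclideanSpace_fin]; linarith
  have h2 := finite_integral_one_add_norm
    (μ := (volume : Measure (EuclideanSpace ℝ (Fin n)))) h
  have h3 : -((n:ℝ) + 1) = -(n:ℝ) - 1 := by ring
  rwa [h3] at h2

lemma aux_translate (n : ℕ) (b : ℝ) (x : EuclideanSpace ℝ (Fin n)) :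
    ∫⁻ y : EuclideanSpace ℝ (Fin n), ENNReal.ofReal ((b + ‖x - y‖) ^ (-(n:ℝ) - 1)) =
    ∫⁻ z : EuclideanSpace ℝ (Fin n), ENNReal.ofReal ((b + ‖z‖) ^ (-(n:ℝ) - 1)) := by
  have hg : Measurable fun z : EuclideanSpace ℝ (Fin n) =>
      ENNReal.ofReal ((b + ‖z‖) ^ (-(n:ℝ) - 1)) :=
    ((measurable_const.add measurable_norm).pow_const _).ennreal_ofReal
  exact (Measure.measurePreserving_sub_left volume x).lintegral_comp hg

lemma aux_scale (n : ℕ) {b : ℝ} (hb : 0 < b) :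
    ∫⁻ z : EuclideanSpace ℝ (Fin n), ENNReal.ofReal ((b + ‖z‖) ^ (-(n:ℝ) - 1)) =
    ENNReal.ofReal b⁻¹ *
      ∫⁻ z : EuclideanSpace ℝ (Fin n), ENNReal.ofReal ((1 + ‖z‖) ^ (-(n:ℝ) - 1)) := by
  set E := EuclideanSpace ℝ (Fin n)
  have hg : Measurable fun z : E => ENNReal.ofReal ((b + ‖z‖) ^ (-(n:ℝ) - 1)) :=
    ((measurable_const.add measurable_norm).pow_const _).ennreal_ofReal
  have hsm : Measurable fun z : E => b • z := measurable_const_smul b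
  have key : ∫⁻ z : E, ENNReal.ofReal ((b + ‖z‖) ^ (-(n:ℝ) - 1))
        ∂(Measure.map (fun z : E => b • z) volume)
      = ∫⁻ w : E, ENNReal.ofReal ((b + ‖b • w‖) ^ (-(n:ℝ) - 1)) :=
    lintegral_map hg hsm
  rw [Measure.map_addHaar_smul volume hb.ne'] at key
  simp only [lintegral_smul_measure] at key
  have hfr : Module.finrank ℝ E = n := finrank_euclideanSpace_fin
  rw [hfr] at key
  have habs : |(b ^ n)⁻¹| = (b ^ n)⁻¹ := abs_of_nonneg (by positivity)
  rw [habs] at key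
  have hrhs : ∀ w : E, ENNReal.ofReal ((b + ‖b • w‖) ^ (-(n:ℝ) - 1))
      = ENNReal.ofReal (b ^ (-(n:ℝ) - 1)) * ENNReal.ofReal ((1 + ‖w‖) ^ (-(n:ℝ) - 1)) := by
    intro w
    rw [norm_smul, Real.norm_eq_abs, abs_of_pos hb]
    have h : b + b * ‖w‖ = b * (1 + ‖w‖) := by ring
    rw [h, Real.mul_rpow hb.le (by positivity), ENNReal.ofReal_mul (by positivity)]
  simp only [hrhs] at key
  rw [lintegral_const_mul' _ _ ENNReal.ofReal_ne_top] at key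
  have hbn : ENNReal.ofReal (b ^ n) * ENNReal.ofReal ((b ^ n)⁻¹) = 1 := by
    rw [← ENNReal.ofReal_mul (by positivity), mul_inv_cancel₀ (by positivity)]
    exact ENNReal.ofReal_one
  calc ∫⁻ z : E, ENNReal.ofReal ((b + ‖z‖) ^ (-(n:ℝ) - 1))
      = ENNReal.ofReal (b ^ n) * (ENNReal.ofReal ((b ^ n)⁻¹) *
          ∫⁻ z : E, ENNReal.ofReal ((b + ‖z‖) ^ (-(n:ℝ) - 1))) := by
        rw [← mul_assoc, hbn, one_mul]
    _ = ENNReal.ofReal (b ^ n) * (ENNReal.ofReal (b ^ (-(n:ℝ) - 1)) *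
          ∫⁻ w : E, ENNReal.ofReal ((1 + ‖w‖) ^ (-(n:ℝ) - 1))) := by rw [← key, smul_eq_mul]
    _ = ENNReal.ofReal b⁻¹ *
          ∫⁻ z : E, ENNReal.ofReal ((1 + ‖z‖) ^ (-(n:ℝ) - 1)) := by
        rw [← mul_assoc, ← ENNReal.ofReal_mul (by positivity)]
        congr 2
        rw [← Real.rpow_natCast b n, ← Real.rpow_add hb]
        rw [show (n:ℝ) + (-(n:ℝ) - 1) = -1 by ring, Real.rpow_neg_one]

lemma aux_time {t₀ p : ℝ} (ht₀ : 0 < t₀) (hp : -1 < p) (hp1 : p + 1 ≠ 0) :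
    ∫⁻ s in Set.Ioc (0:ℝ) t₀, ENNReal.ofReal (s ^ p) =
      ENNReal.ofReal (t₀ ^ (p+1) / (p+1)) := by
  have hf : IntegrableOn (fun s : ℝ => s ^ p) (Set.Ioc 0 t₀) :=
    (intervalIntegrable_iff_integrableOn_Ioc_of_le ht₀.le).mp
      (intervalIntegral.intervalIntegrable_rpow' hp)
  have hnn : 0 ≤ᵐ[volume.restrict (Set.Ioc (0:ℝ) t₀)] fun s : ℝ => s ^ p := by
    filter_upwards [ae_restrict_mem measurableSet_Ioc] with s hs
    exact Real.rpow_nonneg hs.1.le p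
  rw [← ofReal_integral_eq_lintegral_ofReal hf hnn]
  congr 1
  rw [← intervalIntegral.integral_of_le ht₀.le, integral_rpow (Or.inl hp),
    Real.zero_rpow hp1]
  ring

/-- Quantitative estimate used to show the solution at time `t₀` stays in the
critical Besov space:
`t^{1-1/(2α)} ‖∫_0^{t₀} ∫ K_{t+t₀-s}(x-y) |u(y,s)|² dy ds‖_{L^∞_x}
  ≤ C_α (t₀/t)^{(1-α)/α} ‖u‖_{GX}² ≤ C_α ‖u‖_{GX}²`. -/
theorem stmt_16 (n : ℕ) (hn : 1 ≤ n) (α : ℝ) (hα : 1/2 < α) (hα' : α < 1)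
    (C : ℝ) (hC : 0 ≤ C) :
    ∃ Cα : ℝ, 0 < Cα ∧
      ∀ (t₀ t : ℝ), 0 < t₀ → t₀ < t →
        ∀ K : ℝ → EuclideanSpace ℝ (Fin n) → ℝ,
          (∀ s x, 0 < s → |K s x| ≤ C * (s ^ (1/(2*α)) + ‖x‖) ^ (-(n : ℝ) - 1)) →
          ∀ u : EuclideanSpace ℝ (Fin n) → ℝ → EuclideanSpace ℝ (Fin n),
            GXnorm n α u < ⊤ →
            (ENNReal.ofReal (t ^ (1 - 1/(2*α))) *
                ⨆ x : EuclideanSpace ℝ (Fin n),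
                  ∫⁻ s in Set.Ioc (0:ℝ) t₀,
                    ∫⁻ y, ENNReal.ofReal |K (t + t₀ - s) (x - y)| *
                      (‖u y s‖₊ : ℝ≥0∞) ^ 2
              ≤ ENNReal.ofReal (Cα * (t₀/t) ^ ((1 - α)/α)) * (GXnorm n α u) ^ 2) ∧
            ENNReal.ofReal (Cα * (t₀/t) ^ ((1 - α)/α)) * (GXnorm n α u) ^ 2
              ≤ ENNReal.ofReal Cα * (GXnorm n α u) ^ 2 := by
  have hα0 : 0 < α := by linarith
  have h2α : 0 < 2*α := by linarith
  have he : 0 < (1 - α)/α := div_pos (by linarith) hα0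
  set I := ∫⁻ z : EuclideanSpace ℝ (Fin n), ENNReal.ofReal ((1 + ‖z‖) ^ (-(n:ℝ) - 1))
    with hI_def
  have hI : I < ⊤ := aux_I_lt_top n
  set cI := I.toReal with hcI_def
  have hIle : I ≤ ENNReal.ofReal cI := le_of_eq (ENNReal.ofReal_toReal hI.ne).symm
  have hcI : (0:ℝ) ≤ cI := ENNReal.toReal_nonneg
  refine ⟨(C * cI + 1) / ((1 - α)/α), by positivity, ?_⟩
  intro t₀ t ht₀ htt K hK u hu
  have ht : 0 < t := ht₀.trans htt
  have hβpos : 0 < 1 - 1/(2*α) := by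
    have h1 : 1/(2*α) < 1 := by rw [div_lt_one h2α]; linarith
    linarith
  have hMne : GXnorm n α u ≠ ⊤ := hu.ne
  set b : ℝ := t ^ (1/(2*α)) with hb_def
  have hbpos : 0 < b := Real.rpow_pos_of_pos ht _
  constructor
  · -- main estimate
    have hUS : ∀ s : ℝ, 0 < s →
        (⨆ y : EuclideanSpace ℝ (Fin n), (‖u y s‖₊ : ℝ≥0∞)) ≤
          GXnorm n α u * ENNReal.ofReal (s ^ (-(1 - 1/(2*α)))) := by
      intro s hs
      have hsβ : (0:ℝ) < s ^ (1 - 1/(2*α)) := Real.rpow_pos_of_pos hs _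
      have h1 : ENNReal.ofReal (s ^ (1 - 1/(2*α))) *
          (⨆ y : EuclideanSpace ℝ (Fin n), (‖u y s‖₊ : ℝ≥0∞)) ≤ GXnorm n α u :=
        le_iSup₂ (f := fun (s : ℝ) (_ : 0 < s) =>
          ENNReal.ofReal (s ^ (1 - 1/(2*α))) *
            ⨆ x : EuclideanSpace ℝ (Fin n), (‖u x s‖₊ : ℝ≥0∞)) s hs
      rw [mul_comm] at h1
      have h2 : (⨆ y : EuclideanSpace ℝ (Fin n), (‖u y s‖₊ : ℝ≥0∞)) ≤
          GXnorm n α u / ENNReal.ofReal (s ^ (1 - 1/(2*α))) :=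
        (ENNReal.le_div_iff_mul_le (Or.inl (ENNReal.ofReal_pos.2 hsβ).ne')
          (Or.inl ENNReal.ofReal_ne_top)).mpr h1
      rwa [div_eq_mul_inv, ← ENNReal.ofReal_inv_of_pos hsβ,
        ← Real.rpow_neg hs.le] at h2
    have hKb : ∀ s ∈ Set.Ioc (0:ℝ) t₀, ∀ z : EuclideanSpace ℝ (Fin n),
        ENNReal.ofReal |K (t + t₀ - s) z| ≤
          ENNReal.ofReal (C * (b + ‖z‖) ^ (-(n:ℝ) - 1)) := by
      intro s hs z
      have hτ : 0 < t + t₀ - s := by have := hs.2; linarith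
      apply ENNReal.ofReal_le_ofReal
      refine (hK _ z hτ).trans (mul_le_mul_of_nonneg_left ?_ hC)
      apply Real.rpow_le_rpow_of_nonpos (by positivity) ?_ (by push_cast; linarith [Nat.cast_nonneg (α := ℝ) n])
      have h : t ≤ t + t₀ - s := by have := hs.2; linarith
      exact add_le_add_left (Real.rpow_le_rpow ht.le h (by positivity)) _
    have hker : ∀ x : EuclideanSpace ℝ (Fin n),
        (∫⁻ y, ENNReal.ofReal (C * (b + ‖x - y‖) ^ (-(n:ℝ) - 1))) ≤
          ENNReal.ofReal (C * b⁻¹ * cI) := by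
      intro x
      have h1 : ∀ y : EuclideanSpace ℝ (Fin n),
          ENNReal.ofReal (C * (b + ‖x - y‖) ^ (-(n:ℝ) - 1)) =
          ENNReal.ofReal C * ENNReal.ofReal ((b + ‖x - y‖) ^ (-(n:ℝ) - 1)) :=
        fun y => ENNReal.ofReal_mul hC
      simp only [h1]
      rw [lintegral_const_mul' _ _ ENNReal.ofReal_ne_top, aux_translate n b x,
        aux_scale n hbpos, ← hI_def]
      calc ENNReal.ofReal C * (ENNReal.ofReal b⁻¹ * I)
          ≤ ENNReal.ofReal C * (ENNReal.ofReal b⁻¹ * ENNReal.ofReal cI) := by gcongr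
        _ = ENNReal.ofReal (C * b⁻¹ * cI) := by
            rw [ENNReal.ofReal_mul (by positivity), ENNReal.ofReal_mul hC, mul_assoc]
    have hA : ∀ x : EuclideanSpace ℝ (Fin n),
        (∫⁻ s in Set.Ioc (0:ℝ) t₀,
            ∫⁻ y, ENNReal.ofReal |K (t + t₀ - s) (x - y)| * (‖u y s‖₊ : ℝ≥0∞) ^ 2)
        ≤ (ENNReal.ofReal (C * b⁻¹ * cI) * (GXnorm n α u) ^ 2) *
            ENNReal.ofReal (t₀ ^ ((1 - α)/α) / ((1 - α)/α)) := by
      intro x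
      have hcs_ne : ∀ s : ℝ,
          (GXnorm n α u * ENNReal.ofReal (s ^ (-(1 - 1/(2*α))))) ^ 2 ≠ ⊤ :=
        fun s => ENNReal.pow_ne_top (ENNReal.mul_ne_top hMne ENNReal.ofReal_ne_top)
      have step1 : ∀ s ∈ Set.Ioc (0:ℝ) t₀,
          (∫⁻ y, ENNReal.ofReal |K (t + t₀ - s) (x - y)| * (‖u y s‖₊ : ℝ≥0∞) ^ 2)
          ≤ (ENNReal.ofReal (C * b⁻¹ * cI) * (GXnorm n α u) ^ 2) *
              ENNReal.ofReal (s ^ (1/α - 2)) := by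
        intro s hs
        have hub : ∀ y : EuclideanSpace ℝ (Fin n), (‖u y s‖₊ : ℝ≥0∞) ^ 2 ≤
            (GXnorm n α u * ENNReal.ofReal (s ^ (-(1 - 1/(2*α))))) ^ 2 := fun y =>
          pow_le_pow_left' ((le_iSup (fun y : EuclideanSpace ℝ (Fin n) =>
            (‖u y s‖₊ : ℝ≥0∞)) y).trans (hUS s hs.1)) 2
        have hsq : (ENNReal.ofReal (s ^ (-(1 - 1/(2*α))))) ^ 2 =
            ENNReal.ofReal (s ^ (1/α - 2)) := by
          rw [← ENNReal.ofReal_pow (Real.rpow_nonneg hs.1.le _)]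
          congr 1
          rw [← Real.rpow_natCast (s ^ (-(1 - 1/(2*α)))) 2, ← Real.rpow_mul hs.1.le]
          congr 1
          push_cast
          field_simp
          ring
        calc (∫⁻ y, ENNReal.ofReal |K (t + t₀ - s) (x - y)| * (‖u y s‖₊ : ℝ≥0∞) ^ 2)
            ≤ ∫⁻ y, ENNReal.ofReal (C * (b + ‖x - y‖) ^ (-(n:ℝ) - 1)) *
                (GXnorm n α u * ENNReal.ofReal (s ^ (-(1 - 1/(2*α))))) ^ 2 :=
              lintegral_mono fun y => mul_le_mul' (hKb s hs _) (hub y)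
          _ = (∫⁻ y, ENNReal.ofReal (C * (b + ‖x - y‖) ^ (-(n:ℝ) - 1))) *
                (GXnorm n α u * ENNReal.ofReal (s ^ (-(1 - 1/(2*α))))) ^ 2 :=
              lintegral_mul_const' _ _ (hcs_ne s)
          _ ≤ ENNReal.ofReal (C * b⁻¹ * cI) *
                (GXnorm n α u * ENNReal.ofReal (s ^ (-(1 - 1/(2*α))))) ^ 2 :=
              mul_le_mul_left (hker x) _
          _ = (ENNReal.ofReal (C * b⁻¹ * cI) * (GXnorm n α u) ^ 2) *
                ENNReal.ofReal (s ^ (1/α - 2)) := by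
              rw [mul_pow, hsq]; ring
      have h1α : (1:ℝ) < 1/α := by rw [lt_div_iff₀ hα0]; linarith
      have hp : (-1:ℝ) < 1/α - 2 := by linarith
      have hpe : 1/α - 2 + 1 = (1 - α)/α := by field_simp; ring
      calc (∫⁻ s in Set.Ioc (0:ℝ) t₀,
              ∫⁻ y, ENNReal.ofReal |K (t + t₀ - s) (x - y)| * (‖u y s‖₊ : ℝ≥0∞) ^ 2)
          ≤ ∫⁻ s in Set.Ioc (0:ℝ) t₀,
              (ENNReal.ofReal (C * b⁻¹ * cI) * (GXnorm n α u) ^ 2) *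
                ENNReal.ofReal (s ^ (1/α - 2)) :=
            setLIntegral_mono' measurableSet_Ioc step1
        _ = (ENNReal.ofReal (C * b⁻¹ * cI) * (GXnorm n α u) ^ 2) *
              ∫⁻ s in Set.Ioc (0:ℝ) t₀, ENNReal.ofReal (s ^ (1/α - 2)) :=
            lintegral_const_mul' _ _
              (ENNReal.mul_ne_top ENNReal.ofReal_ne_top (ENNReal.pow_ne_top hMne))
        _ = (ENNReal.ofReal (C * b⁻¹ * cI) * (GXnorm n α u) ^ 2) *
              ENNReal.ofReal (t₀ ^ ((1 - α)/α) / ((1 - α)/α)) := by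
            rw [aux_time ht₀ hp (by rw [hpe]; exact he.ne')]
            rw [hpe]
    refine le_trans (mul_le_mul_right (iSup_le hA) _) ?_
    rw [show ∀ a c d : ℝ≥0∞, a * ((c * (GXnorm n α u)^2) * d) =
        (a * c * d) * (GXnorm n α u)^2 from fun a c d => by ring]
    apply mul_le_mul_left
    rw [← ENNReal.ofReal_mul (Real.rpow_nonneg ht.le _),
      ← ENNReal.ofReal_mul (by positivity)]
    apply ENNReal.ofReal_le_ofReal
    -- real-number inequality
    have hbinv : b⁻¹ = t ^ (-(1/(2*α))) := by
      rw [hb_def, ← Real.rpow_neg ht.le]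
    have hte : t ^ (1 - 1/(2*α)) * t ^ (-(1/(2*α))) = (t ^ ((1 - α)/α))⁻¹ := by
      rw [← Real.rpow_add ht, ← Real.rpow_neg ht.le]
      congr 1
      field_simp
      ring
    calc t ^ (1 - 1/(2*α)) * (C * b⁻¹ * cI) * (t₀ ^ ((1 - α)/α) / ((1 - α)/α))
        = (C * cI / ((1 - α)/α)) *
            (t₀ ^ ((1 - α)/α) * (t ^ (1 - 1/(2*α)) * b⁻¹)) := by ring
      _ = (C * cI / ((1 - α)/α)) *
            (t₀ ^ ((1 - α)/α) * (t ^ ((1 - α)/α))⁻¹) := by rw [hbinv, hte]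
      _ = (C * cI / ((1 - α)/α)) * (t₀/t) ^ ((1 - α)/α) := by
          rw [Real.div_rpow ht₀.le ht.le]; ring
      _ ≤ (C * cI + 1) / ((1 - α)/α) * (t₀/t) ^ ((1 - α)/α) := by
          have h2 : C * cI / ((1 - α)/α) ≤ (C * cI + 1) / ((1 - α)/α) := by
            gcongr
            linarith
          exact mul_le_mul_of_nonneg_right h2 (Real.rpow_nonneg (by positivity) _)
  · apply mul_le_mul_left
    apply ENNReal.ofReal_le_ofReal
    have h1 : (t₀/t) ^ ((1 - α)/α) ≤ 1 :=
      Real.rpow_le_one (by positivity) (by rw [div_le_one ht]; exact htt.le) he.le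
    have hCα : (0:ℝ) ≤ (C * cI + 1) / ((1 - α)/α) := by positivity
    exact mul_le_of_le_one_right hCα h1
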